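/- Let L > 0 and let g : ℝ → ℝ be Lipschitz with Lipschitz constant L, vanish outside the interval [−1,1], and satisfy ∫_{−1}^{1} g(z) dz = 0. Set M = sup_{z∈ℝ} |g(z)| and M⁺ = sup_{z∈ℝ} g(z). Then M⁺ ≥ M²/(2L). In particular, if g is not identically zero then M⁺ > 0. -/

import Mathlib

open MeasureTheory Set

/-- Lower bound on the positive part of a Lipschitz function with zero mean
that is supported in `[-1,1]` (equations (3.28)–(3.32) of the paper):
`M⁺ ≥ M²/(2L)`, where `M = sup |g|` and `M⁺ = sup g`. -/
theorem sup_pos_part_lower_bound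
    (L : ℝ) (hL : 0 < L) (g : ℝ → ℝ)
    (hLip : ∀ x y : ℝ, |g x - g y| ≤ L * |x - y|)
    (hsupp : ∀ z : ℝ, z ∉ Set.Icc (-1:ℝ) 1 → g z = 0)
    (hint : (∫ z in (-1:ℝ)..1, g z) = 0) :
    (⨆ z : ℝ, |g z|) ^ 2 / (2 * L) ≤ (⨆ z : ℝ, g z) ∧
      (g ≠ 0 → 0 < ⨆ z : ℝ, g z) := by
  have hLip' : LipschitzWith ⟨L, hL.le⟩ g :=
    LipschitzWith.of_dist_le_mul (by
      intro x y
      rw [Real.dist_eq, Real.dist_eq]; exact hLip x y)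
  have hcont : Continuous g := hLip'.continuous
  -- boundary values vanish
  have hg1 : g 1 = 0 := by
    by_contra h
    have hA : 0 < |g 1| := abs_pos.mpr h
    set ε := |g 1| / (2 * L) with hεdef
    have hεpos : 0 < ε := by positivity
    have h2 := hLip 1 (1 + ε)
    rw [hsupp (1 + ε) (by
      intro hmem; rw [Set.mem_Icc] at hmem; linarith [hmem.2])] at h2
    have habs : |(1:ℝ) - (1 + ε)| = ε := by
      rw [abs_sub_comm]
      have : (1:ℝ) + ε - 1 = ε := by ring
      rw [this, abs_of_pos hεpos]
    rw [sub_zero, habs] at h2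
    have hLε : L * ε = |g 1| / 2 := by
      rw [hεdef]; field_simp
    rw [hLε] at h2
    linarith
  have hgm1 : g (-1) = 0 := by
    by_contra h
    have hA : 0 < |g (-1)| := abs_pos.mpr h
    set ε := |g (-1)| / (2 * L) with hεdef
    have hεpos : 0 < ε := by positivity
    have h2 := hLip (-1) (-1 - ε)
    rw [hsupp (-1 - ε) (by
      intro hmem; rw [Set.mem_Icc] at hmem; linarith [hmem.1])] at h2
    have habs : |(-1:ℝ) - (-1 - ε)| = ε := by
      have : (-1:ℝ) - (-1 - ε) = ε := by ring
      rw [this, abs_of_pos hεpos]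
    rw [sub_zero, habs] at h2
    have hLε : L * ε = |g (-1)| / 2 := by
      rw [hεdef]; field_simp
    rw [hLε] at h2
    linarith
  -- global bound |g| ≤ L
  have hgL : ∀ z : ℝ, |g z| ≤ L := by
    intro z
    by_cases hz : z ∈ Set.Icc (-1:ℝ) 1
    · obtain ⟨hz1, hz2⟩ := hz
      rcases le_total z 0 with hz0 | hz0
      · have := hLip z (-1)
        rw [hgm1, sub_zero] at this
        have h1 : |z - (-1)| ≤ 1 := by rw [abs_le]; constructor <;> linarith
        calc |g z| ≤ L * |z - (-1)| := this
          _ ≤ L * 1 := by nlinarith [abs_nonneg (z - (-1))]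
          _ = L := mul_one L
      · have := hLip z 1
        rw [hg1, sub_zero] at this
        have h1 : |z - 1| ≤ 1 := by rw [abs_le]; constructor <;> linarith
        calc |g z| ≤ L * |z - 1| := this
          _ ≤ L * 1 := by nlinarith [abs_nonneg (z - 1)]
          _ = L := mul_one L
    · rw [hsupp z hz, abs_zero]; exact hL.le
  have hbddg : BddAbove (Set.range g) := by
    refine ⟨L, ?_⟩
    rintro _ ⟨z, rfl⟩
    exact (le_abs_self _).trans (hgL z)
  have hbddag : BddAbove (Set.range fun z => |g z|) := by
    refine ⟨L, ?_⟩
    rintro _ ⟨z, rfl⟩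
    exact hgL z
  set S := ⨆ z : ℝ, g z with hSdef
  have hS : ∀ z, g z ≤ S := fun z => le_ciSup hbddg z
  have hS0 : 0 ≤ S := by
    have := hS 2
    rwa [hsupp 2 (by norm_num)] at this
  -- the max of |g| is attained
  obtain ⟨z₀, hz₀mem, hz₀max⟩ := isCompact_Icc.exists_isMaxOn (Set.nonempty_Icc.mpr (by norm_num : (-1:ℝ) ≤ 1)) (hcont.abs.continuousOn)
  set M := |g z₀| with hMdef
  have hM : ∀ z, |g z| ≤ M := by
    intro z
    by_cases hz : z ∈ Set.Icc (-1:ℝ) 1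
    · exact hz₀max hz
    · rw [hsupp z hz, abs_zero]; exact abs_nonneg _
  have hsup_abs : (⨆ z : ℝ, |g z|) = M :=
    le_antisymm (ciSup_le hM) (le_ciSup hbddag z₀)
  have hM0 : 0 ≤ M := abs_nonneg _
  have hML : M ≤ L := hgL z₀
  -- main inequality
  have main : M ^ 2 / (2 * L) ≤ S := by
    rcases le_or_gt 0 (g z₀) with hpos | hneg
    · -- sup attained at positive value
      have hMS : M ≤ S := by rw [hMdef, abs_of_nonneg hpos]; exact hS z₀
      rw [div_le_iff₀ (by positivity)]
      nlinarith
    · -- min case : g z₀ = -M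
      have hgz₀ : g z₀ = -M := by rw [hMdef, abs_of_neg hneg]; ring
      have hMpos : 0 < M := by rw [hMdef]; exact abs_pos.mpr hneg.ne
      set r := M / L with hrdef
      have hr : 0 < r := by positivity
      have hLr : L * r = M := by rw [hrdef]; field_simp
      set a := z₀ - r with hadef
      set b := z₀ + r with hbdef
      have hab : a < b := by simp only [hadef, hbdef]; linarith
      -- the open interval (a,b) is contained in [-1,1]
      have key : Set.Ioo a b ⊆ Set.Icc (-1:ℝ) 1 := by
        intro z hz
        by_contra hzout
        have hzg : g z = 0 := hsupp z hzout
        have h2 := hLip z z₀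
        rw [hzg, hgz₀, zero_sub, abs_neg, abs_neg, abs_of_pos hMpos] at h2
        have hzr : |z - z₀| < r := by
          rw [abs_lt]
          obtain ⟨h1, h2⟩ := hz
          constructor <;> [skip; skip] <;> simp only [hadef, hbdef] at h1 h2 <;> linarith
        nlinarith
      have hIcc : Set.Icc a b ⊆ Set.Icc (-1:ℝ) 1 := by
        rw [← closure_Ioo hab.ne]
        exact closure_minimal key isClosed_Icc
      have ha1 : (-1:ℝ) ≤ a := (hIcc (Set.left_mem_Icc.mpr hab.le)).1
      have hb1 : b ≤ 1 := (hIcc (Set.right_mem_Icc.mpr hab.le)).2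
      -- pointwise bound
      have gbound : ∀ z : ℝ, g z ≤ L * |z - z₀| - M := by
        intro z
        have := hLip z z₀
        have h1 : g z - g z₀ ≤ L * |z - z₀| := (le_abs_self _).trans this
        rw [hgz₀] at h1
        linarith
      have hInt : ∀ u v : ℝ, IntervalIntegrable g volume u v :=
        fun u v => hcont.intervalIntegrable u v
      -- split the integral
      have hsplit : (∫ z in (-1:ℝ)..a, g z) + (∫ z in a..z₀, g z) + (∫ z in z₀..b, g z)
          + (∫ z in b..(1:ℝ), g z) = 0 := by
        rw [intervalIntegral.integral_add_adjacent_intervals (hInt _ _) (hInt _ _),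
          intervalIntegral.integral_add_adjacent_intervals (hInt _ _) (hInt _ _),
          intervalIntegral.integral_add_adjacent_intervals (hInt _ _) (hInt _ _)]
        exact hint
      -- bounds on the outside pieces
      have I1 : (∫ z in (-1:ℝ)..a, g z) ≤ S * (a + 1) := by
        calc (∫ z in (-1:ℝ)..a, g z) ≤ ∫ _ in (-1:ℝ)..a, S :=
              intervalIntegral.integral_mono_on (by linarith) (hInt _ _)
                intervalIntegrable_const (fun z _ => hS z)
          _ = S * (a + 1) := by
              rw [intervalIntegral.integral_const, smul_eq_mul]; ring
      have I4 : (∫ z in b..(1:ℝ), g z) ≤ S * (1 - b) := by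
        calc (∫ z in b..(1:ℝ), g z) ≤ ∫ _ in b..(1:ℝ), S :=
              intervalIntegral.integral_mono_on (by linarith) (hInt _ _)
                intervalIntegrable_const (fun z _ => hS z)
          _ = S * (1 - b) := by
              rw [intervalIntegral.integral_const, smul_eq_mul]; ring
      -- bounds on the middle pieces
      have I2 : (∫ z in a..z₀, g z) ≤ -(M ^ 2 / (2 * L)) := by
        have hb' : ∀ z ∈ Set.Icc a z₀, g z ≤ (L * z₀ - M) - L * z := by
          intro z hz
          have h := gbound z
          have : |z - z₀| = z₀ - z := by
            rw [abs_sub_comm, abs_of_nonneg (by linarith [hz.2])]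
          rw [this] at h
          linarith
        have hc2 : IntervalIntegrable (fun z : ℝ => L * z) volume a z₀ :=
          (continuous_const.mul continuous_id').intervalIntegrable _ _
        have hcalc : (∫ z in a..z₀, ((L * z₀ - M) - L * z)) = -(M ^ 2 / (2 * L)) := by
          rw [intervalIntegral.integral_sub intervalIntegrable_const hc2,
            intervalIntegral.integral_const, intervalIntegral.integral_const_mul,
            integral_id, smul_eq_mul]
          simp only [hadef, hrdef]
          field_simp
          ring
        calc (∫ z in a..z₀, g z) ≤ ∫ z in a..z₀, ((L * z₀ - M) - L * z) :=
              intervalIntegral.integral_mono_on (by linarith) (hInt _ _)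
                (intervalIntegrable_const.sub hc2) hb'
          _ = -(M ^ 2 / (2 * L)) := hcalc
      have I3 : (∫ z in z₀..b, g z) ≤ -(M ^ 2 / (2 * L)) := by
        have hb' : ∀ z ∈ Set.Icc z₀ b, g z ≤ L * z - (L * z₀ + M) := by
          intro z hz
          have h := gbound z
          have : |z - z₀| = z - z₀ := abs_of_nonneg (by linarith [hz.1])
          rw [this] at h
          linarith
        have hc2 : IntervalIntegrable (fun z : ℝ => L * z) volume z₀ b :=
          (continuous_const.mul continuous_id').intervalIntegrable _ _
        have hcalc : (∫ z in z₀..b, (L * z - (L * z₀ + M))) = -(M ^ 2 / (2 * L)) := by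
          rw [intervalIntegral.integral_sub hc2 intervalIntegrable_const,
            intervalIntegral.integral_const, intervalIntegral.integral_const_mul,
            integral_id, smul_eq_mul]
          simp only [hbdef, hrdef]
          field_simp
          ring
        calc (∫ z in z₀..b, g z) ≤ ∫ z in z₀..b, (L * z - (L * z₀ + M)) :=
              intervalIntegral.integral_mono_on (by linarith) (hInt _ _)
                (hc2.sub intervalIntegrable_const) hb'
          _ = -(M ^ 2 / (2 * L)) := hcalc
      -- combine
      have hba : (a + 1) + (1 - b) = 2 - 2 * r := by
        simp only [hadef, hbdef]; ring
      have hcomb : 0 ≤ S * (a + 1) + S * (1 - b) - 2 * (M ^ 2 / (2 * L)) := by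
        nlinarith [hsplit, I1, I2, I3, I4]
      have hSsum : S * (a + 1) + S * (1 - b) ≤ 2 * S := by
        have h1 : 0 ≤ a + 1 := by linarith
        have h2 : 0 ≤ 1 - b := by linarith
        nlinarith
      linarith
  refine ⟨by rwa [hsup_abs], ?_⟩
  intro hne
  have hMpos : 0 < M := by
    by_contra hM'
    push_neg at hM'
    apply hne
    funext z
    have := hM z
    have : |g z| = 0 := le_antisymm (by linarith) (abs_nonneg _)
    simpa using this
  calc (0:ℝ) < M ^ 2 / (2 * L) := by positivity
    _ ≤ S := main
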